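/- The union of the regions R_σ over all linear extensions σ of a finite poset P equals the order polytope O(P). -/
import Mathlib

/-- Type synonym of `P` carrying the order refined by `f`. -/
def AuxOrd (P : Type*) (_f : P → ℝ) : Type _ := P

/-- Reinterpret an element of `P` as an element of `AuxOrd P f`. -/
def AuxOrd.mk {P : Type*} (f : P → ℝ) (x : P) : AuxOrd P f := x

/-- Reinterpret an element of `AuxOrd P f` as an element of `P`. -/
def AuxOrd.out {P : Type*} {f : P → ℝ} (x : AuxOrd P f) : P := x

instance AuxOrd.partialOrder (P : Type*) [PartialOrder P] (f : P → ℝ) :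
    PartialOrder (AuxOrd P f) where
  le x y := f x.out < f y.out ∨ (f x.out = f y.out ∧ x.out ≤ y.out)
  le_refl x := Or.inr ⟨rfl, le_refl _⟩
  le_trans x y z hxy hyz := by
    rcases hxy with h | ⟨h, h'⟩ <;> rcases hyz with g | ⟨g, g'⟩
    · exact Or.inl (h.trans g)
    · exact Or.inl (g ▸ h)
    · exact Or.inl (h ▸ g)
    · exact Or.inr ⟨h.trans g, le_trans h' g'⟩
  le_antisymm x y hxy hyx := by
    rcases hxy with h | ⟨h, h'⟩ <;> rcases hyx with g | ⟨g, g'⟩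
    · exact absurd (h.trans g) (lt_irrefl _)
    · exact absurd h (g ▸ lt_irrefl _)
    · exact absurd g (h ▸ lt_irrefl _)
    · exact le_antisymm (α := P) h' g'

instance AuxOrd.fintype (P : Type*) [Fintype P] (f : P → ℝ) : Fintype (AuxOrd P f) :=
  ‹Fintype P›

instance LinearExtension.fintype (α : Type*) [Fintype α] : Fintype (LinearExtension α) :=
  ‹Fintype α›

/-- The union of the regions `R_σ` over all linear extensions `σ` of a finite poset `P`
equals the order polytope `O(P)`. -/
theorem union_Rsigma_eq_orderPolytope (P : Type*) [Fintype P] [PartialOrder P] :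
    (⋃ σ : {σ : Fin (Fintype.card P) ≃ P // ∀ i j, σ i ≤ σ j → i ≤ j},
        {f : P → ℝ | (∀ x, f x ∈ Set.Icc (0:ℝ) 1) ∧
          ∀ i j, i ≤ j → f (σ.1 i) ≤ f (σ.1 j)})
      = {f : P → ℝ | (∀ x, f x ∈ Set.Icc (0:ℝ) 1) ∧ ∀ x y, x ≤ y → f x ≤ f y} := by
  ext f
  simp only [Set.mem_iUnion, Set.mem_setOf_eq]
  constructor
  · rintro ⟨σ, hbd, hmono⟩
    refine ⟨hbd, fun x y hxy => ?_⟩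
    have h := σ.2 (σ.1.symm x) (σ.1.symm y) (by simpa using hxy)
    simpa using hmono _ _ h
  · rintro ⟨hbd, hmono⟩
    -- `g` : P → LinearExtension (AuxOrd P f), the identity as an order-preserving map
    let g : P → LinearExtension (AuxOrd P f) := fun x => toLinearExtension (AuxOrd.mk f x)
    have hg : Function.Bijective g := Function.bijective_id
    -- `f` is monotone with respect to the linear extension of the refined order
    have key : ∀ x y : P, g x ≤ g y → f x ≤ f y := by
      intro x y hxy
      by_contra h
      push_neg at h
      have hyx' : AuxOrd.mk f y ≤ AuxOrd.mk f x := Or.inl h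
      have hyx : g y ≤ g x := toLinearExtension.monotone hyx'
      have hxy' : x = y := hg.injective (le_antisymm hxy hyx)
      exact absurd h (by rw [hxy']; exact lt_irrefl _)
    have hPL : ∀ x y : P, x ≤ y → g x ≤ g y := by
      intro x y hxy
      refine toLinearExtension.monotone ?_
      rcases lt_or_eq_of_le (hmono x y hxy) with h | h
      · exact Or.inl h
      · exact Or.inr ⟨h, hxy⟩
    have hcard : Fintype.card (LinearExtension (AuxOrd P f)) = Fintype.card P := rfl
    let e : Fin (Fintype.card P) ≃o LinearExtension (AuxOrd P f) :=
      monoEquivOfFin _ hcard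
    let ginv : LinearExtension (AuxOrd P f) → P := fun x => x
    have hginv : ∀ x, g (ginv x) = x := fun _ => rfl
    refine ⟨⟨e.toEquiv.trans (Equiv.ofBijective g hg).symm, ?_⟩, hbd, ?_⟩
    · intro i j hij
      have h1 : g ((Equiv.ofBijective g hg).symm (e i)) ≤
          g ((Equiv.ofBijective g hg).symm (e j)) := hPL _ _ hij
      have e1 : g ((Equiv.ofBijective g hg).symm (e i)) = e i :=
        (Equiv.ofBijective g hg).apply_symm_apply (e i)
      have e2 : g ((Equiv.ofBijective g hg).symm (e j)) = e j :=
        (Equiv.ofBijective g hg).apply_symm_apply (e j)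
      rw [e1, e2] at h1
      exact e.le_iff_le.mp h1
    · intro i j hij
      have h1 : (e i : LinearExtension (AuxOrd P f)) ≤ e j := e.le_iff_le.mpr hij
      refine key _ _ ?_
      show g ((Equiv.ofBijective g hg).symm (e i)) ≤ g ((Equiv.ofBijective g hg).symm (e j))
      have e1 : g ((Equiv.ofBijective g hg).symm (e i)) = e i :=
        (Equiv.ofBijective g hg).apply_symm_apply (e i)
      have e2 : g ((Equiv.ofBijective g hg).symm (e j)) = e j :=
        (Equiv.ofBijective g hg).apply_symm_apply (e j)
      rw [e1, e2]
      exact h1
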